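/- The rational function β(z) = 256(z − 1)/(z⁴(z² + 4z + 20)) is a Belyi function: for every complex number z with z⁴(z² + 4z + 20) ≠ 0, if the derivative of β vanishes at z, then β(z) = 0 or β(z) = 1. -/

import Mathlib

/-- The rational function `β(z) = 256(z − 1)/(z⁴(z² + 4z + 20))` is a Belyi function: all
of its finite critical values lie in `{0, 1}`. -/
theorem belyi_S51_411 (β : ℂ → ℂ)
    (hβ : ∀ z, β z = 256 * (z - 1) / (z ^ 4 * (z ^ 2 + 4 * z + 20))) :
    ∀ z : ℂ, z ^ 4 * (z ^ 2 + 4 * z + 20) ≠ 0 → deriv β z = 0 → β z = 0 ∨ β z = 1 := by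
  have hβf : β = fun z => 256 * (z - 1) / (z ^ 4 * (z ^ 2 + 4 * z + 20)) := funext hβ
  subst hβf
  intro z hD hd
  have hz : z ≠ 0 := by
    intro h; apply hD; simp [h]
  have h1 : HasDerivAt (fun z : ℂ => 256 * (z - 1)) 256 z := by
    simpa using ((hasDerivAt_id z).sub_const 1).const_mul (256 : ℂ)
  have h2 : HasDerivAt (fun z : ℂ => z ^ 4 * (z ^ 2 + 4 * z + 20))
      (4 * z ^ 3 * (z ^ 2 + 4 * z + 20) + z ^ 4 * (2 * z + 4)) z := by
    have hp : HasDerivAt (fun z : ℂ => z ^ 2 + 4 * z + 20) (2 * z + 4) z := by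
      have h := ((hasDerivAt_pow 2 z).add (((hasDerivAt_id z).const_mul (4:ℂ)).add_const 20))
      convert h using 1 <;> try rfl
      · funext x; simp [id]; ring
      · push_cast; ring
    have h := (hasDerivAt_pow 4 z).mul hp
    convert h using 1 <;> try rfl

  have hdv : HasDerivAt (fun z : ℂ => 256 * (z - 1) / (z ^ 4 * (z ^ 2 + 4 * z + 20)))
      ((256 * (z ^ 4 * (z ^ 2 + 4 * z + 20)) -
        256 * (z - 1) * (4 * z ^ 3 * (z ^ 2 + 4 * z + 20) + z ^ 4 * (2 * z + 4))) /
        (z ^ 4 * (z ^ 2 + 4 * z + 20)) ^ 2) z := h1.div h2 hD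
  rw [hdv.deriv] at hd
  have hnum : 256 * (z ^ 4 * (z ^ 2 + 4 * z + 20)) -
      256 * (z - 1) * (4 * z ^ 3 * (z ^ 2 + 4 * z + 20) + z ^ 4 * (2 * z + 4)) = 0 := by
    rcases div_eq_zero_iff.mp hd with h | h
    · exact h
    · exact absurd h (pow_ne_zero 2 hD)
  -- factor: numerator = 256 * (-5) * z^3 * (z^3 + 2z^2 + 8z - 16)
  have hq : z ^ 3 + 2 * z ^ 2 + 8 * z - 16 = 0 := by
    have h3 : z ^ 3 * (z ^ 3 + 2 * z ^ 2 + 8 * z - 16) = 0 := by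
      linear_combination (-1/1280 : ℂ) * hnum
    rcases mul_eq_zero.mp h3 with h | h
    · exact absurd h (pow_ne_zero 3 hz)
    · exact h
  right
  rw [div_eq_one_iff_eq hD]
  linear_combination (- z ^ 3 - 2 * z ^ 2 - 8 * z + 16) * hq
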